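/- If dynamic policy ↣ is more restrictive than ↣' (i.e., ↣ ≤ ↣': for all α, u, v, α ⊨ u ↣ v implies α ⊨ u ↣' v), and {∼ᵘⁿʷ_u} and {≈ᵘⁿʷ_u} are the unwinding relations (smallest equivalence relations satisfying WSC and DLR) for ↣ and ↣' respectively, then ≈ᵘⁿʷ_u ⊆ ∼ᵘⁿʷ_u for all u ∈ D. -/
import Mathlib


open Classical

/-- Binary trees over actions, values of the `ta` purge functions. -/
inductive TATree (A : Type) : Type where
  | eps : TATree A
  | node : TATree A → TATree A → A → TATree A

/-- Run a deterministic system along a trace (newest action at the head of the list). -/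
def runL {S A : Type} (step : S → A → S) (s0 : S) : List A → S
  | [] => s0
  | a :: α => step (runL step s0 α) a

/-- The permissive purge function `ta^◇` for a dynamic policy `P`. -/
noncomputable def taD {D A : Type} (dm : A → D) (P : List A → D → D → Prop) :
    List A → D → TATree A
  | [], _ => TATree.eps
  | a :: α, u =>
    if P α (dm a) u then TATree.node (taD dm P α u) (taD dm P α (dm a)) a
    else taD dm P α u

/-- The unwinding relations: smallest family of equivalence relations on traces
satisfying WSC and DLR with respect to the dynamic policy `P`. -/
inductive Unw {D A : Type} (dm : A → D) (P : List A → D → D → Prop) :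
    D → List A → List A → Prop where
  | refl (u : D) (α : List A) : Unw dm P u α α
  | symm {u : D} {α β : List A} : Unw dm P u α β → Unw dm P u β α
  | trans {u : D} {α β γ : List A} : Unw dm P u α β → Unw dm P u β γ → Unw dm P u α γ
  | dlr (u : D) (α : List A) (a : A) : ¬ P α (dm a) u → Unw dm P u (a :: α) α
  | wsc (u : D) {α β : List A} (a : A) :
      Unw dm P u α β → Unw dm P (dm a) α β → Unw dm P u (a :: α) (a :: β)

/-- The prohibitive purge function `ta^□`, whose condition is distributed knowledge
of the policy edge, interpreted over the Kripke structure given by the unwinding relations. -/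
noncomputable def taB {D A : Type} (dm : A → D) (P : List A → D → D → Prop) :
    List A → D → TATree A
  | [], _ => TATree.eps
  | a :: α, u =>
    if (∀ β, Unw dm P u α β → Unw dm P (dm a) α β → P β (dm a) u) then
      TATree.node (taB dm P α u) (taB dm P α (dm a)) a
    else taB dm P α u

/-- if `P ≤ P'` then the unwinding relations of `P'` are contained in
those of `P`. -/
theorem statement_2 {D A : Type} (dm : A → D) (P P' : List A → D → D → Prop)
    (hle : ∀ α u v, P α u v → P' α u v) :
    ∀ u (α β : List A), Unw dm P' u α β → Unw dm P u α β := by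
  intro u α β h
  induction h with
  | refl u α => exact Unw.refl u α
  | symm _ ih => exact Unw.symm ih
  | trans _ _ ih1 ih2 => exact Unw.trans ih1 ih2
  | dlr u α a hn => exact Unw.dlr u α a (fun hp => hn (hle _ _ _ hp))
  | wsc u a _ _ ih1 ih2 => exact Unw.wsc u a ih1 ih2
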